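/- Let G=(V,E) be a connected graph such that R_d(G) has a strict circuit decomposition and each R_d-circuit is (d+1)-edge-connected. Then k_d(G) ≤ (1/2)(d−1)(|V| − (r*_d(G) + d + 1)), equivalently r*_d(G) ≤ |V| − (2/(d−1)) k_d(G) − (d+1) for d ≥ 2. -/

import Mathlib

open Module

/-- The row of the `d`-dimensional rigidity matrix corresponding to the edge `uv`, at the
realization `p : V → ℝ^d`: it has `p u - p v` in the `d` columns of `u`, `p v - p u` in
the `d` columns of `v`, and zeros elsewhere. -/
def rigidityRow {V : Type*} [DecidableEq V] (d : ℕ) (p : V → Fin d → ℝ) :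
    Sym2 V → (V × Fin d → ℝ) :=
  Sym2.lift ⟨fun u v x =>
      if x.1 = u then p u x.2 - p v x.2 else if x.1 = v then p v x.2 - p u x.2 else 0, by
    intro u v
    funext x
    by_cases huv : u = v
    · subst huv; rfl
    · by_cases h1 : x.1 = u <;> by_cases h2 : x.1 = v
      · exact absurd (h1 ▸ h2) huv
      · simp [h1, h2, huv, Ne.symm huv]
      · simp [h1, h2, huv, Ne.symm huv]
      · simp [h1, h2]⟩

/-- The rank, in the `d`-dimensional generic rigidity matroid on vertex set `V`, of a set
`A` of edges: the maximum, over all realizations `p : V → ℝ^d`, of the rank of the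
corresponding set of rigidity matrix rows. -/
noncomputable def genRigidityRank {V : Type*} [DecidableEq V] (d : ℕ) (A : Set (Sym2 V)) :
    ℕ :=
  ⨆ p : V → Fin d → ℝ, finrank ℝ (Submodule.span ℝ (rigidityRow d p '' A))

/-- A finite set `A` of edges is a circuit of the `d`-dimensional generic rigidity matroid
if its rank is `|A| - 1` and every proper subset is independent. -/
def IsRdCircuitSet {V : Type*} [DecidableEq V] (d : ℕ) (A : Set (Sym2 V)) : Prop :=
  A.Finite ∧ genRigidityRank d A + 1 = A.ncard ∧
    ∀ B ⊂ A, genRigidityRank d B = B.ncard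

/-- A graph `G` is an `R_d`-circuit if its edge set is a circuit of the `d`-dimensional
generic rigidity matroid. -/
def SimpleGraph.IsRdCircuit {V : Type*} [DecidableEq V] (d : ℕ) (G : SimpleGraph V) :
    Prop :=
  IsRdCircuitSet d G.edgeSet

/-- `k_d(G) = d|V| - binom(d+1)(2) - r_d(E)`, the number of degrees of freedom of `G`
in `ℝ^d` (an integer). -/
noncomputable def degFreedom {V : Type*} [DecidableEq V] [Fintype V] (d : ℕ)
    (G : SimpleGraph V) : ℤ :=
  d * Fintype.card V - (d + 1).choose 2 - genRigidityRank d G.edgeSet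

/-- The set of vertices covered by a set of edges. -/
def vertsOf {V : Type*} (A : Set (Sym2 V)) : Set V := {v | ∃ e ∈ A, v ∈ e}

/-- A set `A` of edges (viewed as a graph on `vertsOf A`) is `k`-edge-connected: every
edge cut separating its vertex set contains at least `k` edges. -/
def IsKEdgeConnectedEdgeSet {V : Type*} (k : ℕ) (A : Set (Sym2 V)) : Prop :=
  ∀ S : Set V, S ⊆ vertsOf A → S.Nonempty → (vertsOf A \ S).Nonempty →
    k ≤ {e ∈ A | ∃ u v : V, e = s(u, v) ∧ u ∈ S ∧ v ∉ S}.ncard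

/-- `D j = C 0 ∪ ⋯ ∪ C (j-1)`, the union of the first `j` edge sets of a sequence. -/
def circUnion {V : Type*} (C : ℕ → Set (Sym2 V)) (j : ℕ) : Set (Sym2 V) := ⋃ i < j, C i

/-- `(C 0, …, C (t-1))` is a circuit decomposition of the `d`-dimensional generic rigidity
matroid of `G`: each `C i` is an `R_d`-circuit contained in the edge set of `G`, for
`i ≥ 1` the lobe `C i \ D i` is nonempty (E1) and inclusionwise minimal among the lobes of
circuits of `R_d(G)` having a nonempty lobe (E2), and the circuits cover `E(G)`. -/
def SimpleGraph.IsRdCircDecomp {V : Type*} [DecidableEq V] (d : ℕ) (G : SimpleGraph V)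
    (C : ℕ → Set (Sym2 V)) (t : ℕ) : Prop :=
  (∀ i < t, C i ⊆ G.edgeSet ∧ IsRdCircuitSet d (C i)) ∧
  (∀ i, 1 ≤ i → i < t →
    C i \ circUnion C i ≠ ∅ ∧
    ∀ C' ⊆ G.edgeSet, IsRdCircuitSet d C' → C' \ circUnion C i ≠ ∅ →
      ¬ (C' \ circUnion C i ⊂ C i \ circUnion C i)) ∧
  circUnion C t = G.edgeSet

/-- A circuit decomposition is strict if every circuit adds at least one new vertex. -/
def SimpleGraph.IsStrictRdCircDecomp {V : Type*} [DecidableEq V] (d : ℕ)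
    (G : SimpleGraph V) (C : ℕ → Set (Sym2 V)) (t : ℕ) : Prop :=
  G.IsRdCircDecomp d C t ∧ ∀ i < t, (vertsOf (C i) \ vertsOf (circUnion C i)).Nonempty

set_option linter.unusedSectionVars false

section RankBasics

variable {V : Type*} [DecidableEq V] [Fintype V] {d : ℕ}

open Submodule

lemma rigidityRow_apply (d : ℕ) (p : V → Fin d → ℝ) (u v : V) (x : V × Fin d) :
    rigidityRow d p s(u, v) x =
      if x.1 = u then p u x.2 - p v x.2 else if x.1 = v then p v x.2 - p u x.2 else 0 := rfl

noncomputable def rowRank (d : ℕ) (p : V → Fin d → ℝ) (A : Set (Sym2 V)) : ℕ :=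
  finrank ℝ (Submodule.span ℝ (rigidityRow d p '' A))

lemma genRigidityRank_eq_iSup (d : ℕ) (A : Set (Sym2 V)) :
    genRigidityRank d A = ⨆ p : V → Fin d → ℝ, rowRank d p A := rfl

lemma rowRank_bddAbove (d : ℕ) (A : Set (Sym2 V)) :
    BddAbove (Set.range fun p : V → Fin d → ℝ => rowRank d p A) := by
  refine ⟨finrank ℝ (V × Fin d → ℝ), ?_⟩
  rintro x ⟨p, rfl⟩
  exact Submodule.finrank_le _

lemma rowRank_le_genRigidityRank (d : ℕ) (p : V → Fin d → ℝ) (A : Set (Sym2 V)) :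
    rowRank d p A ≤ genRigidityRank d A :=
  le_ciSup (rowRank_bddAbove d A) p

lemma exists_rowRank_eq (d : ℕ) (A : Set (Sym2 V)) :
    ∃ p : V → Fin d → ℝ, rowRank d p A = genRigidityRank d A := by
  have h : genRigidityRank d A ∈ Set.range fun p : V → Fin d → ℝ => rowRank d p A := by
    rw [genRigidityRank_eq_iSup, iSup]
    exact Nat.sSup_mem (Set.range_nonempty _) (rowRank_bddAbove d A)
  exact h.imp fun p hp => hp

lemma genRigidityRank_le (d : ℕ) (A : Set (Sym2 V)) {n : ℕ}
    (h : ∀ p : V → Fin d → ℝ, rowRank d p A ≤ n) : genRigidityRank d A ≤ n :=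
  ciSup_le h

lemma rowRank_mono (d : ℕ) (p : V → Fin d → ℝ) {A B : Set (Sym2 V)} (h : A ⊆ B) :
    rowRank d p A ≤ rowRank d p B :=
  Submodule.finrank_mono (span_mono (Set.image_mono h))

lemma genRigidityRank_mono {A B : Set (Sym2 V)} (h : A ⊆ B) :
    genRigidityRank d A ≤ genRigidityRank d B :=
  genRigidityRank_le d A fun p => (rowRank_mono d p h).trans (rowRank_le_genRigidityRank d p B)

lemma rowRank_le_ncard (d : ℕ) (p : V → Fin d → ℝ) {A : Set (Sym2 V)} (hA : A.Finite) :
    rowRank d p A ≤ A.ncard := by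
  have him : (rigidityRow d p '' A).Finite := hA.image _
  have : Fintype (rigidityRow d p '' A) := him.fintype
  calc rowRank d p A ≤ (rigidityRow d p '' A).toFinset.card := finrank_span_le_card _
    _ = (rigidityRow d p '' A).ncard := (Set.ncard_eq_toFinset_card' _).symm
    _ ≤ A.ncard := Set.ncard_image_le hA

lemma genRigidityRank_le_ncard {A : Set (Sym2 V)} (hA : A.Finite) :
    genRigidityRank d A ≤ A.ncard :=
  genRigidityRank_le d A fun p => rowRank_le_ncard d p hA

lemma rowRank_insert_le (d : ℕ) (p : V → Fin d → ℝ) (A : Set (Sym2 V)) (e : Sym2 V) :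
    rowRank d p (insert e A) ≤ rowRank d p A + 1 := by
  unfold rowRank
  rw [Set.image_insert_eq, Submodule.span_insert]
  have h1 : finrank ℝ ↥(span ℝ {rigidityRow d p e} ⊔ span ℝ (rigidityRow d p '' A)) ≤
      finrank ℝ (span ℝ ({rigidityRow d p e} : Set (V × Fin d → ℝ))) +
        finrank ℝ (span ℝ (rigidityRow d p '' A)) := by
    have := finrank_sup_add_finrank_inf_eq (span ℝ ({rigidityRow d p e} : Set (V × Fin d → ℝ)))
      (span ℝ (rigidityRow d p '' A))
    omega
  have h2 : finrank ℝ (span ℝ ({rigidityRow d p e} : Set (V × Fin d → ℝ))) ≤ 1 := by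
    by_cases hz : rigidityRow d p e = 0
    · rw [hz, Submodule.span_zero_singleton]
      simp
    · rw [finrank_span_singleton hz]
  omega

lemma genRigidityRank_insert_le (A : Set (Sym2 V)) (e : Sym2 V) :
    genRigidityRank d (insert e A) ≤ genRigidityRank d A + 1 :=
  genRigidityRank_le d _ fun p => (rowRank_insert_le d p A e).trans
    (by exact Nat.add_le_add_right (rowRank_le_genRigidityRank d p A) 1)

end RankBasics
set_option maxHeartbeats 1000000

section Gram

open Matrix

variable {ι W : Type*} [Fintype ι] [DecidableEq ι] [Fintype W]

noncomputable def gramMat (v : ι → (W → ℝ)) : Matrix ι ι ℝ :=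
  Matrix.of fun i j => ∑ x, v i x * v j x

lemma gram_swap (v : ι → W → ℝ) (g : ι → ℝ) (j : ι) :
    ∑ k, (∑ x, v j x * v k x) * g k = ∑ x, v j x * ∑ k, g k * v k x := by
  calc ∑ k, (∑ x, v j x * v k x) * g k
      = ∑ k, ∑ x, v j x * (g k * v k x) := by
        refine Finset.sum_congr rfl fun k _ => ?_
        rw [Finset.sum_mul]
        refine Finset.sum_congr rfl fun x _ => by ring
    _ = ∑ x, ∑ k, v j x * (g k * v k x) := Finset.sum_comm
    _ = ∑ x, v j x * ∑ k, g k * v k x := by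
        refine Finset.sum_congr rfl fun x _ => ?_
        rw [Finset.mul_sum]

lemma gramMat_det_ne_zero_iff (v : ι → (W → ℝ)) :
    (gramMat v).det ≠ 0 ↔ LinearIndependent ℝ v := by
  constructor
  · intro hdet
    by_contra hdep
    obtain ⟨g, hg, i, hi⟩ := Fintype.not_linearIndependent_iff.mp hdep
    apply hdet
    rw [← Matrix.exists_mulVec_eq_zero_iff]
    refine ⟨g, fun h => hi (congrFun h i), ?_⟩
    funext j
    have hgv : ∀ x, ∑ k, g k * v k x = 0 := by
      intro x
      have := congrFun hg x
      simpa using this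
    calc (gramMat v).mulVec g j = ∑ k, (∑ x, v j x * v k x) * g k := rfl
      _ = ∑ x, v j x * (∑ k, g k * v k x) := gram_swap v g j
      _ = 0 := by simp [hgv]
  · intro hind hdet
    obtain ⟨c, hc, hmv⟩ := Matrix.exists_mulVec_eq_zero_iff.mpr hdet
    have hw : ∑ x, (∑ k, c k * v k x) ^ 2 = 0 := by
      have hj : ∀ j, ∑ k, (∑ x, v j x * v k x) * c k = 0 := fun j => congrFun hmv j
      have h2 : ∑ j, c j * ∑ k, (∑ x, v j x * v k x) * c k = 0 := by
        simp [hj]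
      calc ∑ x, (∑ k, c k * v k x) ^ 2
          = ∑ x, (∑ j, c j * v j x) * (∑ k, c k * v k x) := by
            congr 1; funext x; ring
        _ = ∑ x, ∑ j, (c j * v j x) * (∑ k, c k * v k x) := by
            refine Finset.sum_congr rfl fun x _ => ?_
            rw [Finset.sum_mul]
        _ = ∑ j, ∑ x, (c j * v j x) * (∑ k, c k * v k x) := Finset.sum_comm
        _ = ∑ j, c j * ∑ x, v j x * (∑ k, c k * v k x) := by
            refine Finset.sum_congr rfl fun j _ => ?_
            rw [Finset.mul_sum]
            refine Finset.sum_congr rfl fun x _ => by ring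
        _ = ∑ j, c j * ∑ k, (∑ x, v j x * v k x) * c k := by
            refine Finset.sum_congr rfl fun j _ => ?_
            rw [gram_swap v c j]
        _ = 0 := h2
    have hzero : ∀ x, ∑ k, c k * v k x = 0 := by
      intro x
      have hnn : ∀ y ∈ Finset.univ, (0:ℝ) ≤ (∑ k, c k * v k y) ^ 2 := fun y _ => sq_nonneg _
      have := (Finset.sum_eq_zero_iff_of_nonneg hnn).mp hw x (Finset.mem_univ x)
      exact pow_eq_zero_iff two_ne_zero |>.mp this
    have hsum : ∑ k, c k • v k = 0 := by
      funext x
      have := hzero x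
      simpa [Finset.sum_apply] using this
    obtain ⟨k, hk⟩ := Function.ne_iff.mp hc
    exact hk ((Fintype.linearIndependent_iff.mp hind c hsum) k)

end Gram
section Generic

open MvPolynomial Submodule

variable {V : Type*} [DecidableEq V] [Fintype V]

noncomputable def rowPoly (d : ℕ) : Sym2 V → (V × Fin d → MvPolynomial (V × Fin d) ℝ) :=
  Sym2.lift ⟨fun u v x =>
      if x.1 = u then X (u, x.2) - X (v, x.2)
      else if x.1 = v then X (v, x.2) - X (u, x.2) else 0, by
    intro u v
    funext x
    by_cases huv : u = v
    · subst huv; rfl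
    · by_cases h1 : x.1 = u <;> by_cases h2 : x.1 = v
      · exact absurd (h1 ▸ h2) huv
      · simp [h1, h2, huv, Ne.symm huv]
      · simp [h1, h2, huv, Ne.symm huv]
      · simp [h1, h2]⟩

lemma eval_rowPoly (d : ℕ) (q : V × Fin d → ℝ) (e : Sym2 V) (x : V × Fin d) :
    eval q (rowPoly d e x) = rigidityRow d (fun v i => q (v, i)) e x := by
  induction e using Sym2.inductionOn with
  | hf u v =>
    have h1 : rowPoly d s(u, v) x =
        (if x.1 = u then X (u, x.2) - X (v, x.2)
         else if x.1 = v then X (v, x.2) - X (u, x.2) else 0) := rfl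
    rw [h1, rigidityRow_apply]
    split_ifs <;> simp

noncomputable def gramPoly (d : ℕ) (s : Finset (Sym2 V)) :
    Matrix s s (MvPolynomial (V × Fin d) ℝ) :=
  Matrix.of fun e f => ∑ x, rowPoly d (e : Sym2 V) x * rowPoly d (f : Sym2 V) x

lemma eval_gramPoly_det (d : ℕ) (s : Finset (Sym2 V)) (q : V × Fin d → ℝ) :
    eval q (gramPoly d s).det =
      (gramMat (fun e : s => rigidityRow d (fun v i => q (v, i)) (e : Sym2 V))).det := by
  rw [RingHom.map_det]
  congr 1
  ext e f
  simp only [RingHom.mapMatrix_apply, Matrix.map_apply, gramPoly, gramMat, Matrix.of_apply]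
  rw [map_sum]
  refine Finset.sum_congr rfl fun x _ => ?_
  rw [map_mul, eval_rowPoly, eval_rowPoly]

lemma exists_indep_subfamily (d : ℕ) (p : V → Fin d → ℝ) (A : Finset (Sym2 V)) :
    ∃ tA : Finset (Sym2 V), tA ⊆ A ∧ tA.card = rowRank d p ↑A ∧
      LinearIndependent ℝ (fun e : ↥tA => rigidityRow d p (e : Sym2 V)) := by
  classical
  obtain ⟨b, hbsub, hbspan, hbind⟩ := exists_linearIndependent ℝ (rigidityRow d p '' ↑A)
  have hbfin : b.Finite := (A.finite_toSet.image _).subset hbsub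
  haveI : Fintype b := hbfin.fintype
  have hpick : ∀ w : b, ∃ e ∈ A, rigidityRow d p e = (w : V × Fin d → ℝ) := by
    rintro ⟨w, hw⟩
    obtain ⟨e, he, hew⟩ := hbsub hw
    exact ⟨e, he, hew⟩
  choose f hfA hfw using hpick
  have hfinj : Function.Injective f := by
    intro w w' h
    have : (w : V × Fin d → ℝ) = w' := by rw [← hfw w, ← hfw w', h]
    exact Subtype.ext this
  refine ⟨Finset.univ.image f, ?_, ?_, ?_⟩
  · intro e he
    obtain ⟨w, _, rfl⟩ := Finset.mem_image.mp he
    exact hfA w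
  · rw [Finset.card_image_of_injective _ hfinj, Finset.card_univ]
    have : rowRank d p ↑A = finrank ℝ (span ℝ b) := by
      unfold rowRank; rw [hbspan]
    rw [this, finrank_span_set_eq_card hbind, Set.toFinset_card]
  · have hmem : ∀ e : ↥(Finset.univ.image f), rigidityRow d p (e : Sym2 V) ∈ b := by
      rintro ⟨e, he⟩
      obtain ⟨w, _, rfl⟩ := Finset.mem_image.mp he
      rw [hfw w]
      exact w.2
    set σ : ↥(Finset.univ.image f) → b := fun e => ⟨rigidityRow d p (e : Sym2 V), hmem e⟩
      with hσ
    have hσinj : Function.Injective σ := by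
      rintro ⟨e, he⟩ ⟨e', he'⟩ h
      obtain ⟨w, _, rfl⟩ := Finset.mem_image.mp he
      obtain ⟨w', _, rfl⟩ := Finset.mem_image.mp he'
      have : rigidityRow d p (f w) = rigidityRow d p (f w') := by
        simpa [hσ] using h
      rw [hfw w, hfw w'] at this
      exact Subtype.ext (congrArg f (Subtype.ext this))
    have := hbind.comp σ hσinj
    exact this

lemma indep_family_le_rowRank (d : ℕ) (p : V → Fin d → ℝ) {tA : Finset (Sym2 V)}
    {A : Set (Sym2 V)} (h : ↑tA ⊆ A)
    (hind : LinearIndependent ℝ (fun e : ↥tA => rigidityRow d p (e : Sym2 V))) :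
    tA.card ≤ rowRank d p A := by
  have h1 : finrank ℝ (span ℝ (Set.range fun e : ↥tA => rigidityRow d p (e : Sym2 V)))
      = tA.card := by
    rw [finrank_span_eq_card hind, Fintype.card_coe]
  have h2 : (Set.range fun e : ↥tA => rigidityRow d p (e : Sym2 V))
      = rigidityRow d p '' ↑tA := by
    exact (Set.image_eq_range _ _).symm ▸ rfl
  rw [h2] at h1
  rw [← h1]
  exact rowRank_mono d p h

theorem exists_generic_realization (d : ℕ) :
    ∃ p : V → Fin d → ℝ, ∀ A : Finset (Sym2 V),
      rowRank d p ↑A = genRigidityRank d (↑A : Set (Sym2 V)) := by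
  classical
  -- for each A choose a maximizing realization and an independent subfamily
  have hA : ∀ A : Finset (Sym2 V), ∃ tA : Finset (Sym2 V), tA ⊆ A ∧
      tA.card = genRigidityRank d (↑A : Set (Sym2 V)) ∧
      (gramPoly d tA).det ≠ 0 := by
    intro A
    obtain ⟨pA, hpA⟩ := exists_rowRank_eq d (↑A : Set (Sym2 V))
    obtain ⟨tA, htsub, htcard, htind⟩ := exists_indep_subfamily d pA A
    refine ⟨tA, htsub, htcard.trans hpA, ?_⟩
    intro h0
    have := eval_gramPoly_det d tA (fun x => pA x.1 x.2)
    rw [h0, map_zero] at this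
    have hdet : (gramMat (fun e : tA => rigidityRow d pA (e : Sym2 V))).det ≠ 0 :=
      (gramMat_det_ne_zero_iff _).mpr htind
    exact hdet (by rw [← this])
  choose tA htsub htcard htdet using hA
  have hPne : (∏ A : Finset (Sym2 V), (gramPoly d (tA A)).det) ≠ 0 :=
    Finset.prod_ne_zero_iff.mpr fun A _ => htdet A
  have hq : ∃ q : V × Fin d → ℝ,
      eval q (∏ A : Finset (Sym2 V), (gramPoly d (tA A)).det) ≠ 0 := by
    by_contra h
    push_neg at h
    exact hPne (MvPolynomial.funext fun x => by rw [h x, map_zero])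
  obtain ⟨q, hqP⟩ := hq
  refine ⟨fun v i => q (v, i), fun A => ?_⟩
  have hfac : eval q ((gramPoly d (tA A)).det) ≠ 0 := by
    intro h0
    apply hqP
    rw [map_prod]
    exact Finset.prod_eq_zero (Finset.mem_univ A) h0
  rw [eval_gramPoly_det] at hfac
  have hind := (gramMat_det_ne_zero_iff _).mp hfac
  refine le_antisymm (rowRank_le_genRigidityRank d _ _) ?_
  rw [← htcard A]
  exact indep_family_le_rowRank d _ (by exact_mod_cast Finset.coe_subset.mpr (htsub A)) hind

end Generic
section MatroidFacts

open Submodule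

variable {V : Type*} [DecidableEq V] [Fintype V] {d : ℕ}

lemma gen_rowRank {p : V → Fin d → ℝ}
    (hgen : ∀ A : Finset (Sym2 V), rowRank d p ↑A = genRigidityRank d (↑A : Set (Sym2 V)))
    (S : Set (Sym2 V)) : rowRank d p S = genRigidityRank d S := by
  have := hgen S.toFinite.toFinset
  rwa [Set.Finite.coe_toFinset] at this

lemma genRigidityRank_empty : genRigidityRank d (∅ : Set (Sym2 V)) = 0 := by
  have : ∀ p : V → Fin d → ℝ, rowRank d p (∅ : Set (Sym2 V)) = 0 := by
    intro p
    unfold rowRank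
    simp
  rw [genRigidityRank_eq_iSup]
  simp [this]

lemma genRank_singleton (hd : 1 ≤ d) {e : Sym2 V} (he : ¬ e.IsDiag) :
    genRigidityRank d {e} = 1 := by
  refine le_antisymm (by simpa using genRigidityRank_le_ncard (Set.finite_singleton e)) ?_
  induction e using Sym2.inductionOn with
  | hf u v =>
    have huv : u ≠ v := by simpa [Sym2.isDiag_iff_proj_eq] using he
    set p : V → Fin d → ℝ := fun w _ => if w = u then 1 else 0 with hp
    have hne : rigidityRow d p s(u, v) ≠ 0 := by
      intro h0
      have := congrFun h0 (u, ⟨0, hd⟩)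
      rw [rigidityRow_apply] at this
      simp [hp, Ne.symm huv] at this
    have : rowRank d p {s(u, v)} = 1 := by
      unfold rowRank
      rw [Set.image_singleton, finrank_span_singleton hne]
    calc 1 = rowRank d p {s(u, v)} := this.symm
      _ ≤ genRigidityRank d {s(u, v)} := rowRank_le_genRigidityRank d p _

lemma row_ne_zero {p : V → Fin d → ℝ}
    (hgen : ∀ A : Finset (Sym2 V), rowRank d p ↑A = genRigidityRank d (↑A : Set (Sym2 V)))
    (hd : 1 ≤ d) {e : Sym2 V} (he : ¬ e.IsDiag) : rigidityRow d p e ≠ 0 := by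
  intro h0
  have h1 : rowRank d p {e} = 1 := by
    rw [gen_rowRank hgen, genRank_singleton hd he]
  unfold rowRank at h1
  rw [Set.image_singleton, h0, Submodule.span_zero_singleton] at h1
  simp at h1

lemma row_injOn {p : V → Fin d → ℝ}
    (hgen : ∀ A : Finset (Sym2 V), rowRank d p ↑A = genRigidityRank d (↑A : Set (Sym2 V)))
    (hd : 1 ≤ d) {e f : Sym2 V} (he : ¬ e.IsDiag) (hf : ¬ f.IsDiag)
    (hef : rigidityRow d p e = rigidityRow d p f) : e = f := by
  induction e using Sym2.inductionOn with
  | hf u v =>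
    induction f using Sym2.inductionOn with
    | hf a b =>
      have huv : u ≠ v := by simpa [Sym2.isDiag_iff_proj_eq] using he
      have hab : a ≠ b := by simpa [Sym2.isDiag_iff_proj_eq] using hf
      -- the row of s(u,v) is nonzero only at first coordinates u, v
      have hmem : ∀ w : V, (∃ i, rigidityRow d p s(u, v) (w, i) ≠ 0) → w = u ∨ w = v := by
        intro w ⟨i, hi⟩
        rw [rigidityRow_apply] at hi
        by_contra hw
        push_neg at hw
        simp [hw.1, hw.2] at hi
      have hmem' : ∀ w : V, (∃ i, rigidityRow d p s(a, b) (w, i) ≠ 0) → w = a ∨ w = b := by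
        intro w ⟨i, hi⟩
        rw [rigidityRow_apply] at hi
        by_contra hw
        push_neg at hw
        simp [hw.1, hw.2] at hi
      have hne := row_ne_zero hgen hd he
      -- there is a coordinate i with p u i ≠ p v i
      have hex : ∃ i, p u i ≠ p v i := by
        by_contra hall
        push_neg at hall
        apply hne
        funext x
        rw [rigidityRow_apply, Pi.zero_apply]
        split_ifs with h1 h2
        · rw [hall x.2]; ring
        · rw [hall x.2]; ring
        · rfl
      obtain ⟨i, hi⟩ := hex
      have hu : u = a ∨ u = b := by
        apply hmem'
        rw [← hef]
        exact ⟨i, by rw [rigidityRow_apply]; simp [sub_ne_zero.mpr hi]⟩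
      have hv : v = a ∨ v = b := by
        apply hmem'
        rw [← hef]
        refine ⟨i, ?_⟩
        rw [rigidityRow_apply]
        have hvu : ((v, i) : V × Fin d).1 ≠ u := Ne.symm huv
        rw [if_neg hvu, if_pos rfl]
        exact sub_ne_zero.mpr (Ne.symm hi)
      rcases hu with rfl | rfl
      · rcases hv with rfl | rfl
        · exact absurd rfl huv
        · rfl
      · rcases hv with rfl | rfl
        · exact Sym2.eq_swap
        · exact absurd rfl huv

lemma indepSet_rank {p : V → Fin d → ℝ}
    (hgen : ∀ A : Finset (Sym2 V), rowRank d p ↑A = genRigidityRank d (↑A : Set (Sym2 V)))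
    (hd : 1 ≤ d) {S : Set (Sym2 V)} (hS : ∀ e ∈ S, ¬ Sym2.IsDiag e)
    (h : LinearIndependent ℝ (Subtype.val : (rigidityRow d p '' S) → (V × Fin d → ℝ))) :
    genRigidityRank d S = S.ncard := by
  classical
  have hfin : (rigidityRow d p '' S).Finite := Set.toFinite _
  haveI : Fintype (rigidityRow d p '' S) := hfin.fintype
  have h1 : genRigidityRank d S = (rigidityRow d p '' S).toFinset.card := by
    rw [← gen_rowRank hgen]
    exact finrank_span_set_eq_card h
  rw [h1, ← Set.ncard_eq_toFinset_card']
  exact Set.ncard_image_of_injOn fun e he f hf hef =>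
    row_injOn hgen hd (hS e he) (hS f hf) hef

lemma exists_minimal_dep :
    ∀ (n : ℕ) (S : Set (Sym2 V)), S.ncard ≤ n → genRigidityRank d S < S.ncard →
      ∃ C', C' ⊆ S ∧ genRigidityRank d C' < C'.ncard ∧
        ∀ T, T ⊂ C' → ¬ genRigidityRank d T < T.ncard := by
  intro n
  induction n with
  | zero => intro S hn hdep; omega
  | succ n ih =>
    intro S hn hdep
    by_cases hex : ∃ T, T ⊂ S ∧ genRigidityRank d T < T.ncard
    · obtain ⟨T, hTS, hT⟩ := hex
      have hlt : T.ncard < S.ncard := Set.ncard_lt_ncard hTS (Set.toFinite S)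
      obtain ⟨C', h1, h2, h3⟩ := ih T (by omega) hT
      exact ⟨C', h1.trans hTS.subset, h2, h3⟩
    · push_neg at hex
      exact ⟨S, subset_rfl, hdep, fun T hT => not_lt.mpr (hex T hT)⟩

lemma min_dep_is_circuit {C' : Set (Sym2 V)} (hdep : genRigidityRank d C' < C'.ncard)
    (hmin : ∀ T, T ⊂ C' → ¬ genRigidityRank d T < T.ncard) : IsRdCircuitSet d C' := by
  have hne : C'.Nonempty := by
    rcases Set.eq_empty_or_nonempty C' with rfl | h
    · simp at hdep
    · exact h
  obtain ⟨x, hx⟩ := hne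
  have hsub : C' \ {x} ⊂ C' := Set.sdiff_singleton_ssubset.mpr hx
  have h1 : genRigidityRank d (C' \ {x}) = (C' \ {x}).ncard := by
    have := hmin _ hsub
    have hle := genRigidityRank_le_ncard (d := d) (Set.toFinite (C' \ {x}))
    omega
  have h2 : (C' \ {x}).ncard = C'.ncard - 1 := Set.ncard_diff_singleton_of_mem hx
  have h3 : genRigidityRank d (C' \ {x}) ≤ genRigidityRank d C' :=
    genRigidityRank_mono Set.diff_subset
  have h4 : 1 ≤ C'.ncard := by
    have := Set.ncard_pos (Set.toFinite C') |>.mpr ⟨x, hx⟩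
    omega
  refine ⟨Set.toFinite C', by omega, fun B hB => ?_⟩
  have := hmin B hB
  have hle := genRigidityRank_le_ncard (d := d) (Set.toFinite B)
  omega

end MatroidFacts
section KeyLemmas

open Submodule

variable {V : Type*} [DecidableEq V] [Fintype V] {d : ℕ}

lemma circuit_extraction {p : V → Fin d → ℝ}
    (hgen : ∀ A : Finset (Sym2 V), rowRank d p ↑A = genRigidityRank d (↑A : Set (Sym2 V)))
    (hd : 1 ≤ d) {Y : Set (Sym2 V)} (hY : ∀ e ∈ Y, ¬ Sym2.IsDiag e) {e : Sym2 V}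
    (hediag : ¬ e.IsDiag) (heY : e ∉ Y)
    (hspan : rigidityRow d p e ∈ span ℝ (rigidityRow d p '' Y)) :
    ∃ C', C' ⊆ insert e Y ∧ IsRdCircuitSet d C' ∧ e ∈ C' := by
  classical
  obtain ⟨tvec, hsub, hspaneq, hind⟩ := exists_linearIndependent ℝ (rigidityRow d p '' Y)
  set B : Set (Sym2 V) := {f ∈ Y | rigidityRow d p f ∈ tvec} with hB
  have hBY : B ⊆ Y := fun f hf => hf.1
  have hrowsB : rigidityRow d p '' B = tvec := by
    apply Set.eq_of_subset_of_subset
    · rintro w ⟨f, hf, rfl⟩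
      exact hf.2
    · intro w hw
      obtain ⟨f, hf, rfl⟩ := hsub hw
      exact ⟨f, ⟨hf, hw⟩, rfl⟩
  have heB : e ∉ B := fun h => heY (hBY h)
  -- insert e B is dependent
  have hdep : genRigidityRank d (insert e B) < (insert e B).ncard := by
    have h1 : genRigidityRank d (insert e B) = genRigidityRank d B := by
      have hmem : rigidityRow d p e ∈ span ℝ (rigidityRow d p '' B) := by
        rw [hrowsB, hspaneq]
        exact hspan
      rw [← gen_rowRank hgen, ← gen_rowRank hgen]
      unfold rowRank
      rw [Set.image_insert_eq, Submodule.span_insert_eq_span hmem]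
    have h2 : genRigidityRank d B = B.ncard := by
      apply indepSet_rank hgen hd (fun f hf => hY f (hBY hf))
      rw [hrowsB]
      exact hind
    rw [h1, h2, Set.ncard_insert_of_notMem heB (Set.toFinite B)]
    omega
  obtain ⟨C', hC'sub, hC'dep, hC'min⟩ :=
    exists_minimal_dep (insert e B).ncard (insert e B) le_rfl hdep
  have heC' : e ∈ C' := by
    by_contra heC'
    have hC'B : C' ⊆ B := fun f hf => by
      rcases hC'sub hf with rfl | h
      · exact absurd hf heC'
      · exact h
    have : genRigidityRank d C' = C'.ncard := by
      apply indepSet_rank hgen hd (fun f hf => hY f (hBY (hC'B hf)))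
      refine LinearIndepOn.mono (show LinearIndepOn ℝ id tvec from hind) ?_
      rw [← hrowsB]
      exact Set.image_mono hC'B
    omega
  exact ⟨C', hC'sub.trans (Set.insert_subset_insert hBY), min_dep_is_circuit hC'dep hC'min, heC'⟩

lemma rank_zero_of_d_eq_zero (A : Set (Sym2 V)) : genRigidityRank 0 A = 0 := by
  apply Nat.le_antisymm _ (Nat.zero_le _)
  apply genRigidityRank_le
  intro p
  unfold rowRank
  have h0 : finrank ℝ (V × Fin 0 → ℝ) = 0 := by
    haveI : Subsingleton (V × Fin 0 → ℝ) := ⟨fun f g => funext fun x => x.2.elim0⟩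
    exact Module.finrank_zero_of_subsingleton
  calc rowRank 0 p A ≤ finrank ℝ (V × Fin 0 → ℝ) := Submodule.finrank_le _
    _ = 0 := h0

lemma singleton_circuit_d0 (e : Sym2 V) : IsRdCircuitSet 0 {e} := by
  refine ⟨Set.finite_singleton e, ?_, ?_⟩
  · rw [rank_zero_of_d_eq_zero, Set.ncard_singleton]
  · intro B hB
    rw [Set.ssubset_singleton_iff.mp hB, rank_zero_of_d_eq_zero]
    simp

lemma lemmaQ {p : V → Fin d → ℝ}
    (hgen : ∀ A : Finset (Sym2 V), rowRank d p ↑A = genRigidityRank d (↑A : Set (Sym2 V)))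
    (hd : 1 ≤ d) :
    ∀ (n : ℕ) (K D : Set (Sym2 V)), K.ncard ≤ n →
      (∀ e ∈ K, ¬ Sym2.IsDiag e) → (∀ e ∈ D, ¬ Sym2.IsDiag e) → Disjoint K D →
      genRigidityRank d (D ∪ K) + 1 ≤ genRigidityRank d D + K.ncard →
      ∃ C', C' ⊆ D ∪ K ∧ IsRdCircuitSet d C' ∧ (C' \ D).Nonempty ∧ C' \ D ⊆ K := by
  intro n
  induction n with
  | zero =>
    intro K D hn hK hD hdisj hrank
    have : K = ∅ := Set.ncard_eq_zero (Set.toFinite K) |>.mp (by omega)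
    subst this
    rw [Set.union_empty] at hrank
    omega
  | succ n ih =>
    intro K D hn hK hD hdisj hrank
    have hKne : K.Nonempty := by
      rcases Set.eq_empty_or_nonempty K with rfl | h
      · exfalso
        rw [Set.union_empty] at hrank
        rw [Set.ncard_empty] at hrank
        omega
      · exact h
    obtain ⟨e, heK⟩ := hKne
    set K' : Set (Sym2 V) := K \ {e} with hK'
    have hK'card : K'.ncard = K.ncard - 1 := Set.ncard_diff_singleton_of_mem heK
    have hKcard : 1 ≤ K.ncard := (Set.ncard_pos (Set.toFinite K)).mpr ⟨e, heK⟩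
    by_cases hcase : genRigidityRank d (D ∪ K') + 1 ≤ genRigidityRank d D + K'.ncard
    · obtain ⟨C', h1, h2, h3, h4⟩ := ih K' D (by omega)
        (fun f hf => hK f hf.1) hD (hdisj.mono_left Set.diff_subset) hcase
      exact ⟨C', h1.trans (Set.union_subset_union_right D Set.diff_subset), h2, h3,
        h4.trans Set.diff_subset⟩
    · push_neg at hcase
      -- rank(D ∪ K') = rank(D ∪ K), so the row of e is spanned
      have hins : D ∪ K = insert e (D ∪ K') := by
        rw [hK']
        ext f
        simp only [Set.mem_union, Set.mem_insert_iff, Set.mem_diff, Set.mem_singleton_iff]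
        constructor
        · rintro (h | h)
          · exact Or.inr (Or.inl h)
          · by_cases hfe : f = e
            · exact Or.inl hfe
            · exact Or.inr (Or.inr ⟨h, hfe⟩)
        · rintro (rfl | h | h)
          · exact Or.inr heK
          · exact Or.inl h
          · exact Or.inr h.1
      have hle1 : genRigidityRank d (D ∪ K) ≤ genRigidityRank d (D ∪ K') + 1 := by
        rw [hins]
        exact genRigidityRank_insert_le _ _
      have hmono : genRigidityRank d (D ∪ K') ≤ genRigidityRank d (D ∪ K) :=
        genRigidityRank_mono (Set.union_subset_union_right D Set.diff_subset)
      have heq : genRigidityRank d (D ∪ K') = genRigidityRank d (D ∪ K) := by omega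
      have hspan : rigidityRow d p e ∈ span ℝ (rigidityRow d p '' (D ∪ K')) := by
        have hle : span ℝ (rigidityRow d p '' (D ∪ K')) ≤
            span ℝ (rigidityRow d p '' (D ∪ K)) :=
          span_mono (Set.image_mono (Set.union_subset_union_right D Set.diff_subset))
        have hfr : finrank ℝ (span ℝ (rigidityRow d p '' (D ∪ K))) ≤
            finrank ℝ (span ℝ (rigidityRow d p '' (D ∪ K'))) := by
          have e1 := gen_rowRank hgen (S := D ∪ K')
          have e2 := gen_rowRank hgen (S := D ∪ K)
          unfold rowRank at e1 e2
          omega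
        rw [Submodule.eq_of_le_of_finrank_le hle hfr]
        exact subset_span (Set.mem_image_of_mem _ (Set.mem_union_right D heK))
      have heD : e ∉ D := fun h => (hdisj.ne_of_mem heK h) rfl
      have heK' : e ∉ K' := fun h => h.2 rfl
      obtain ⟨C', h1, h2, h3⟩ := circuit_extraction hgen hd
        (fun f hf => hf.elim (hD f) (fun hf' => hK f hf'.1)) (hK e heK)
        (fun h => h.elim heD heK') hspan
      refine ⟨C', by rw [hins]; exact h1, h2, ⟨e, h3, heD⟩, fun f hf => ?_⟩
      rcases h1 hf.1 with rfl | h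
      · exact heK
      · rcases h with h | h
        · exact absurd h hf.2
        · exact h.1

end KeyLemmas
section Nullity

open Submodule

variable {V : Type*} [DecidableEq V] [Fintype V] {d : ℕ}

lemma circUnion_zero (C : ℕ → Set (Sym2 V)) : circUnion C 0 = ∅ := by
  unfold circUnion
  simp

lemma circUnion_succ (C : ℕ → Set (Sym2 V)) (j : ℕ) :
    circUnion C (j + 1) = circUnion C j ∪ C j := by
  unfold circUnion
  ext e
  simp only [Set.mem_iUnion, Set.mem_union, Nat.lt_succ_iff_lt_or_eq]
  constructor
  · rintro ⟨i, hi | rfl, hei⟩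
    · exact Or.inl ⟨i, hi, hei⟩
    · exact Or.inr hei
  · rintro (⟨i, hi, hei⟩ | he)
    · exact ⟨i, Or.inl hi, hei⟩
    · exact ⟨j, Or.inr rfl, he⟩

lemma circUnion_subset {G : SimpleGraph V} {C : ℕ → Set (Sym2 V)} {t : ℕ}
    (h : ∀ i < t, C i ⊆ G.edgeSet) {j : ℕ} (hj : j ≤ t) : circUnion C j ⊆ G.edgeSet := by
  intro e he
  obtain ⟨i, hi, hei⟩ := by simpa [circUnion, Set.mem_iUnion] using he
  exact h i (lt_of_lt_of_le hi hj) hei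

lemma key_lemma (K D : Set (Sym2 V)) (hK : ∀ e ∈ K, ¬ Sym2.IsDiag e)
    (hD : ∀ e ∈ D, ¬ Sym2.IsDiag e) (hdisj : Disjoint K D)
    (hrank : genRigidityRank d (D ∪ K) + 2 ≤ genRigidityRank d D + K.ncard) :
    ∃ C', C' ⊆ D ∪ K ∧ IsRdCircuitSet d C' ∧ (C' \ D).Nonempty ∧ C' \ D ⊂ K := by
  have hmono : genRigidityRank d D ≤ genRigidityRank d (D ∪ K) :=
    genRigidityRank_mono Set.subset_union_left
  have hK2 : 2 ≤ K.ncard := by omega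
  obtain ⟨e, f, heK, hfK, hef⟩ := (Set.one_lt_ncard_iff (Set.toFinite K)).mp (by omega)
  rcases Nat.eq_zero_or_pos d with rfl | hd
  · -- d = 0 : singletons are circuits
    have heD : e ∉ D := fun h => (hdisj.ne_of_mem heK h) rfl
    have hlobe : ({e} : Set (Sym2 V)) \ D = {e} := by
      ext x
      simp only [Set.mem_diff, Set.mem_singleton_iff]
      exact ⟨fun h => h.1, fun h => ⟨h, h ▸ heD⟩⟩
    refine ⟨{e}, by simp [Set.singleton_subset_iff, Set.mem_union, heK],
      singleton_circuit_d0 e, ?_, ?_⟩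
    · rw [hlobe]; exact ⟨e, rfl⟩
    · rw [hlobe]
      refine (Set.ssubset_iff_of_subset (Set.singleton_subset_iff.mpr heK)).mpr
        ⟨f, hfK, fun h => hef (by simpa using h.symm)⟩
  · obtain ⟨p, hgen⟩ := exists_generic_realization (V := V) d
    set K' : Set (Sym2 V) := K \ {e} with hK'def
    have hK'card : K'.ncard = K.ncard - 1 := Set.ncard_diff_singleton_of_mem heK
    have hmono2 : genRigidityRank d (D ∪ K') ≤ genRigidityRank d (D ∪ K) :=
      genRigidityRank_mono (Set.union_subset_union_right D Set.diff_subset)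
    have hq : genRigidityRank d (D ∪ K') + 1 ≤ genRigidityRank d D + K'.ncard := by omega
    obtain ⟨C', h1, h2, h3, h4⟩ := lemmaQ hgen hd K'.ncard K' D le_rfl
      (fun g hg => hK g hg.1) hD (hdisj.mono_left Set.diff_subset) hq
    refine ⟨C', h1.trans (Set.union_subset_union_right D Set.diff_subset), h2, h3, ?_⟩
    refine (Set.ssubset_iff_of_subset (h4.trans Set.diff_subset)).mpr
      ⟨e, heK, fun h => (h4 h).2 rfl⟩

lemma nullity_bound {G : SimpleGraph V} {C : ℕ → Set (Sym2 V)} {t : ℕ}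
    (hdecomp : G.IsRdCircDecomp d C t) :
    G.edgeSet.ncard ≤ genRigidityRank d G.edgeSet + t := by
  have hCsub : ∀ i < t, C i ⊆ G.edgeSet := fun i hi => (hdecomp.1 i hi).1
  have main : ∀ j, j ≤ t → (circUnion C j).ncard ≤ genRigidityRank d (circUnion C j) + j := by
    intro j
    induction j with
    | zero =>
      intro _
      rw [circUnion_zero]
      simp [Set.ncard_empty]
    | succ j ih =>
      intro hj
      have hj' : j < t := hj
      have ihj := ih (le_of_lt hj')
      set D := circUnion C j with hDdef
      set K := (C j) \ D with hKdef
      have hDK : circUnion C (j + 1) = D ∪ K := by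
        rw [circUnion_succ, hKdef, Set.union_diff_self]
      have hdisj : Disjoint K D := Set.disjoint_sdiff_left
      have hcard : (D ∪ K).ncard = D.ncard + K.ncard :=
        Set.ncard_union_eq hdisj.symm (Set.toFinite D) (Set.toFinite K)
      rw [hDK, hcard]
      by_contra hcon
      push_neg at hcon
      have hrank : genRigidityRank d (D ∪ K) + 2 ≤ genRigidityRank d D + K.ncard := by omega
      rcases Nat.eq_zero_or_pos j with rfl | hj1
      · have hD0 : D = ∅ := circUnion_zero C
        have hK0 : K = C 0 := by rw [hKdef, hD0, Set.diff_empty]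
        have hcirc := (hdecomp.1 0 hj').2
        have hc2 := hcirc.2.1
        rw [hD0, Set.empty_union, hK0, genRigidityRank_empty] at hrank
        omega
      · have hDsub : D ⊆ G.edgeSet := circUnion_subset hCsub (le_of_lt hj')
        have hKsub : K ⊆ G.edgeSet := fun e he => (hCsub j hj') he.1
        obtain ⟨C', hC'sub, hC'circ, hC'ne, hC'ssub⟩ := key_lemma K D
          (fun e he => G.not_isDiag_of_mem_edgeSet (hKsub he))
          (fun e he => G.not_isDiag_of_mem_edgeSet (hDsub he)) hdisj hrank
        have hE2 := (hdecomp.2.1 j hj1 hj').2 C'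
          (hC'sub.trans (Set.union_subset hDsub hKsub)) hC'circ
          (Set.nonempty_iff_ne_empty.mp hC'ne)
        exact hE2 hC'ssub
  have := main t le_rfl
  rwa [hdecomp.2.2] at this

end Nullity
section Components

open SimpleGraph

variable {V : Type*} [DecidableEq V] [Fintype V]

def reachSet (H : SimpleGraph V) (v : V) : Set V := {w | H.Reachable v w}

def compSets (H : SimpleGraph V) (W : Set V) : Set (Set V) :=
  {S | ∃ v ∈ W, S = reachSet H v}

lemma mem_reachSet_self (H : SimpleGraph V) (v : V) : v ∈ reachSet H v :=
  Reachable.refl v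

lemma reachSet_eq_of_mem {H : SimpleGraph V} {v z : V} (hz : z ∈ reachSet H v) :
    reachSet H v = reachSet H z := by
  have hvz : H.Reachable v z := hz
  ext w
  exact ⟨fun h => hvz.symm.trans h, fun h => hvz.trans h⟩

lemma compSets_disjoint {H : SimpleGraph V} {W : Set V} {S T : Set V}
    (hS : S ∈ compSets H W) (hT : T ∈ compSets H W) (hme : (S ∩ T).Nonempty) : S = T := by
  obtain ⟨v, _, rfl⟩ := hS
  obtain ⟨w, _, rfl⟩ := hT
  obtain ⟨z, hzS, hzT⟩ := hme
  rw [reachSet_eq_of_mem hzS, reachSet_eq_of_mem hzT]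

lemma compSets_finite (H : SimpleGraph V) (W : Set V) : (compSets H W).Finite := by
  apply Set.Finite.subset ((Set.toFinite W).image (reachSet H))
  rintro S ⟨v, hv, rfl⟩
  exact ⟨v, hv, rfl⟩

lemma reach_closed {H : SimpleGraph V} {T : Set V} (hT : ∀ a b, a ∈ T → H.Adj a b → b ∈ T)
    {v w : V} (hv : v ∈ T) (h : H.Reachable v w) : w ∈ T := by
  obtain ⟨q⟩ := h
  revert hv
  induction q with
  | nil => exact fun hv => hv
  | cons hadj q ih => exact fun hv => ih (hT _ _ hv hadj)

lemma vertsOf_union (A B : Set (Sym2 V)) : vertsOf (A ∪ B) = vertsOf A ∪ vertsOf B := by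
  ext v
  constructor
  · rintro ⟨e, he | he, hv⟩
    · exact Or.inl ⟨e, he, hv⟩
    · exact Or.inr ⟨e, he, hv⟩
  · rintro (⟨e, he, hv⟩ | ⟨e, he, hv⟩)
    · exact ⟨e, Or.inl he, hv⟩
    · exact ⟨e, Or.inr he, hv⟩

lemma compSets_subset_verts {D : Set (Sym2 V)} {S : Set V}
    (hS : S ∈ compSets (fromEdgeSet D) (vertsOf D)) : S ⊆ vertsOf D := by
  obtain ⟨v, hv, rfl⟩ := hS
  intro w hw
  refine reach_closed (T := vertsOf D) ?_ hv hw
  intro a b _ hadj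
  obtain ⟨he, _⟩ := (fromEdgeSet_adj D).mp hadj
  exact ⟨s(a, b), he, by simp⟩

lemma reachSet_union_eq {D Cj : Set (Sym2 V)} {v : V}
    (hd : reachSet (fromEdgeSet D) v ∩ vertsOf Cj = ∅) :
    reachSet (fromEdgeSet (D ∪ Cj)) v = reachSet (fromEdgeSet D) v := by
  apply Set.eq_of_subset_of_subset
  · intro w hw
    refine reach_closed (T := reachSet (fromEdgeSet D) v) ?_ (mem_reachSet_self _ v) hw
    intro a b ha hadj
    obtain ⟨he, hne⟩ := (fromEdgeSet_adj _).mp hadj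
    rcases he with he | he
    · exact Reachable.trans ha (Adj.reachable ((fromEdgeSet_adj D).mpr ⟨he, hne⟩))
    · exfalso
      have : a ∈ reachSet (fromEdgeSet D) v ∩ vertsOf Cj := ⟨ha, s(a, b), he, by simp⟩
      rw [hd] at this
      exact this
  · intro w hw
    exact Reachable.mono (fromEdgeSet_mono Set.subset_union_left) hw

lemma comp_step (D Cj : Set (Sym2 V)) (hne : (vertsOf Cj).Nonempty) :
    (compSets (fromEdgeSet D) (vertsOf D)).ncard + 1 ≤
      (compSets (fromEdgeSet (D ∪ Cj)) (vertsOf D ∪ vertsOf Cj)).ncard +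
      (compSets (fromEdgeSet D) (vertsOf D) ∩
        {S : Set V | (S ∩ vertsOf Cj).Nonempty}).ncard := by
  classical
  obtain ⟨v₀, hv₀⟩ := hne
  set H := fromEdgeSet D with hH
  set H' := fromEdgeSet (D ∪ Cj) with hH'
  set 𝒞 := compSets H (vertsOf D) with h𝒞
  set P : Set (Set V) := {S : Set V | (S ∩ vertsOf Cj).Nonempty} with hP
  have hdiffQ : 𝒞 \ (𝒞 ∩ P) = 𝒞 \ P := by rw [Set.diff_self_inter]
  have hsplit : (𝒞 ∩ P).ncard + (𝒞 \ P).ncard = 𝒞.ncard :=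
    Set.ncard_inter_add_ncard_diff_eq_ncard 𝒞 P (compSets_finite H (vertsOf D))
  have hsub : insert (reachSet H' v₀) (𝒞 \ P) ⊆
      compSets H' (vertsOf D ∪ vertsOf Cj) := by
    rintro S (rfl | hS)
    · exact ⟨v₀, Or.inr hv₀, rfl⟩
    · obtain ⟨⟨v, hv, rfl⟩, hSP⟩ := hS
      have hSempty : reachSet H v ∩ vertsOf Cj = ∅ :=
        Set.not_nonempty_iff_eq_empty.mp hSP
      exact ⟨v, Or.inl hv, (reachSet_union_eq hSempty).symm⟩
  have hnotmem : reachSet H' v₀ ∉ 𝒞 \ P := by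
    rintro ⟨_, hSP⟩
    exact hSP ⟨v₀, mem_reachSet_self H' v₀, hv₀⟩
  have hcard1 : (insert (reachSet H' v₀) (𝒞 \ P)).ncard = (𝒞 \ P).ncard + 1 :=
    Set.ncard_insert_of_notMem hnotmem ((compSets_finite H (vertsOf D)).diff)
  have hcard2 : (insert (reachSet H' v₀) (𝒞 \ P)).ncard ≤
      (compSets H' (vertsOf D ∪ vertsOf Cj)).ncard :=
    Set.ncard_le_ncard hsub (compSets_finite H' _)
  omega

lemma comp_final {G : SimpleGraph V} (hconn : G.Connected) (W : Set V) :
    (compSets (fromEdgeSet G.edgeSet) W).ncard ≤ 1 := by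
  have hsub : compSets (fromEdgeSet G.edgeSet) W ⊆ {Set.univ} := by
    rintro S ⟨v, _, rfl⟩
    have huniv : reachSet G v = Set.univ := by
      ext w
      simp only [Set.mem_univ, iff_true]
      exact hconn.preconnected v w
    rw [fromEdgeSet_edgeSet]
    simp [huniv]
  calc (compSets (fromEdgeSet G.edgeSet) W).ncard ≤ ({Set.univ} : Set (Set V)).ncard :=
        Set.ncard_le_ncard hsub (Set.finite_singleton _)
    _ = 1 := Set.ncard_singleton _

end Components
section StepCounting

open SimpleGraph

variable {V : Type*} [DecidableEq V] [Fintype V]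

lemma sum_filter_card_comm {α β : Type*} (s : Finset α) (t : Finset β)
    (r : α → β → Prop) [∀ a b, Decidable (r a b)] :
    ∑ a ∈ s, (t.filter (fun b => r a b)).card
      = ∑ b ∈ t, (s.filter (fun a => r a b)).card := by
  simp only [Finset.card_filter]
  exact Finset.sum_comm

lemma filter_card_eq_ncard {α : Type*} {s : Set α} (hs : s.Finite) (P : α → Prop)
    [DecidablePred P] : (hs.toFinset.filter P).card = {x ∈ s | P x}.ncard := by
  rw [← Set.ncard_coe_finset, Finset.coe_filter]
  congr 1
  ext x
  simp [Set.Finite.mem_toFinset]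

lemma exists_other_endpoint {e : Sym2 V} (he : ¬ e.IsDiag) {v : V} (hv : v ∈ e) :
    ∃ w, w ∈ e ∧ w ≠ v := by
  induction e using Sym2.inductionOn with
  | hf a b =>
    have hab : a ≠ b := by simpa [Sym2.isDiag_iff_proj_eq] using he
    rcases Sym2.mem_iff.mp hv with rfl | rfl
    · exact ⟨b, by simp, Ne.symm hab⟩
    · exact ⟨a, by simp, hab⟩

lemma step_counting (d : ℕ) (Ci D : Set (Sym2 V))
    (hCie : ∀ e ∈ Ci, ¬ Sym2.IsDiag e)
    (hcut : IsKEdgeConnectedEdgeSet (d + 1) Ci)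
    (hX : (vertsOf Ci \ vertsOf D).Nonempty) :
    (d + 1) * ((vertsOf Ci \ vertsOf D).ncard +
      (compSets (SimpleGraph.fromEdgeSet D) (vertsOf D) ∩
        {S : Set V | (S ∩ vertsOf Ci).Nonempty}).ncard) ≤ 2 * (Ci \ D).ncard := by
  classical
  set X : Set V := vertsOf Ci \ vertsOf D with hXdef
  set F : Set (Sym2 V) := Ci \ D with hFdef
  set Q : Set (Set V) := compSets (SimpleGraph.fromEdgeSet D) (vertsOf D) ∩
      {S : Set V | (S ∩ vertsOf Ci).Nonempty} with hQdef
  set crossP : Set V → Sym2 V → Prop := fun S e =>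
    ∃ u v, e = s(u, v) ∧ u ∈ S ∩ vertsOf Ci ∧ v ∉ S ∩ vertsOf Ci with hcrossP
  have hQfin : Q.Finite :=
    ((compSets_finite (SimpleGraph.fromEdgeSet D) (vertsOf D)).inter_of_left _)
  have hXfin : X.Finite := Set.toFinite X
  have hFfin : F.Finite := Set.toFinite F
  -- claim 1 : edges of Ci meeting X are new
  have hnew : ∀ e ∈ Ci, ∀ v ∈ X, v ∈ e → e ∈ F := by
    intro e he v hv hve
    refine ⟨he, fun heD => ?_⟩
    exact hv.2 ⟨e, heD, hve⟩
  -- claim 2 : each vertex of X is incident with ≥ d+1 new edges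
  have hdeg : ∀ v ∈ X, d + 1 ≤ {e ∈ F | v ∈ e}.ncard := by
    intro v hv
    have hvCi : v ∈ vertsOf Ci := hv.1
    obtain ⟨e₀, he₀, hve₀⟩ := hv.1
    obtain ⟨w, hwe₀, hwv⟩ := exists_other_endpoint (hCie e₀ he₀) hve₀
    have hcut1 := hcut {v} (by simpa using hvCi) ⟨v, rfl⟩
      ⟨w, ⟨e₀, he₀, hwe₀⟩, by simpa using hwv⟩
    refine le_trans hcut1 (Set.ncard_le_ncard ?_ (hFfin.sep _))
    rintro e ⟨he, a, b, heq, ha, hb⟩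
    have ha' : a = v := ha
    have hve : v ∈ e := by rw [heq, ← ha']; simp
    exact ⟨hnew _ he v hv hve, hve⟩
  -- claim 3 : each crossed old component contributes ≥ d+1 new edges
  have hQdeg : ∀ S ∈ Q, d + 1 ≤ {e ∈ F | crossP S e}.ncard := by
    intro S hS
    have hScomp := hS.1
    have hSsub : S ⊆ vertsOf D := compSets_subset_verts hScomp
    have hS'ne : (S ∩ vertsOf Ci).Nonempty := hS.2
    obtain ⟨x₀, hx₀⟩ := hX
    have hcut1 := hcut (S ∩ vertsOf Ci) Set.inter_subset_right hS'ne
      ⟨x₀, hx₀.1, fun h => hx₀.2 (hSsub h.1)⟩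
    refine le_trans hcut1 (Set.ncard_le_ncard ?_ (hFfin.sep _))
    rintro e ⟨he, u, v, rfl, hu, hv⟩
    refine ⟨⟨he, fun heD => ?_⟩, u, v, rfl, hu, hv⟩
    -- if the crossing edge were old, v would be in the same old component S
    have huv : u ≠ v := fun h => hv (h ▸ hu)
    have hadj : (SimpleGraph.fromEdgeSet D).Adj u v :=
      (SimpleGraph.fromEdgeSet_adj D).mpr ⟨heD, huv⟩
    obtain ⟨z, hz, rfl⟩ := hScomp
    have hSu : reachSet (SimpleGraph.fromEdgeSet D) z =
        reachSet (SimpleGraph.fromEdgeSet D) u := reachSet_eq_of_mem hu.1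
    apply hv
    constructor
    · rw [hSu]
      exact hadj.reachable
    · exact ⟨s(u, v), he, by simp⟩
  -- claim 4 : each new edge is counted at most twice
  have hperedge : ∀ e ∈ F, {v ∈ X | v ∈ e}.ncard + {S ∈ Q | crossP S e}.ncard ≤ 2 := by
    intro e heF
    have heCi : e ∈ Ci := heF.1
    induction e using Sym2.inductionOn with
    | hf a b =>
      have hab : a ≠ b := by
        have := hCie _ heCi
        simpa [Sym2.isDiag_iff_proj_eq] using this
      have h1 : {v ∈ X | v ∈ s(a, b)} ⊆ ({a, b} : Set V) ∩ X := by
        rintro v ⟨hvX, hve⟩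
        exact ⟨by simpa using Sym2.mem_iff.mp hve, hvX⟩
      have hone : ∀ S ∈ {S ∈ Q | crossP S s(a, b)},
          (if a ∈ S then a else b) ∈ (({a, b} : Set V) \ X) ∩ S := by
        rintro S ⟨hSQ, u, v, huv, hu, hv⟩
        have hSsub : S ⊆ vertsOf D := compSets_subset_verts hSQ.1
        have hab' : a ∈ S ∨ b ∈ S := by
          rcases Sym2.eq_iff.mp huv with ⟨rfl, rfl⟩ | ⟨rfl, rfl⟩
          · exact Or.inl hu.1
          · exact Or.inr hu.1
        by_cases haS : a ∈ S
        · simp only [if_pos haS]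
          exact ⟨⟨Or.inl rfl, fun hX' => hX'.2 (hSsub haS)⟩, haS⟩
        · have hbS : b ∈ S := hab'.resolve_left haS
          simp only [if_neg haS]
          exact ⟨⟨Or.inr rfl, fun hX' => hX'.2 (hSsub hbS)⟩, hbS⟩
      have h2 : {S ∈ Q | crossP S s(a, b)}.ncard ≤ (({a, b} : Set V) \ X).ncard := by
        apply Set.ncard_le_ncard_of_injOn (fun S => if a ∈ S then a else b)
        · intro S hS
          exact (hone S hS).1
        · intro S hS T hT hST
          have hTmem := (hone T hT).2
          have hSmem := (hone S hS).2
          simp only at hST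
          rw [hST] at hSmem
          exact compSets_disjoint hS.1.1 hT.1.1 ⟨_, hSmem, hTmem⟩
      have h3 : {v ∈ X | v ∈ s(a, b)}.ncard ≤ (({a, b} : Set V) ∩ X).ncard :=
        Set.ncard_le_ncard h1 (Set.toFinite _)
      have h4 : (({a, b} : Set V) ∩ X).ncard + (({a, b} : Set V) \ X).ncard
          = ({a, b} : Set V).ncard :=
        Set.ncard_inter_add_ncard_diff_eq_ncard _ _ (Set.toFinite _)
      have h5 : ({a, b} : Set V).ncard ≤ 2 := by
        refine le_trans (Set.ncard_insert_le a {b}) ?_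
        rw [Set.ncard_singleton]
      omega
  -- now assemble by double counting
  set Fx := hXfin.toFinset with hFx
  set Ff := hFfin.toFinset with hFf
  set FQ := hQfin.toFinset with hFQ
  have hW1 : (d + 1) * Fx.card ≤ ∑ e ∈ Ff, (Fx.filter (fun v => v ∈ e)).card := by
    rw [sum_filter_card_comm Ff Fx (fun e v => v ∈ e)]
    calc (d + 1) * Fx.card = ∑ _v ∈ Fx, (d + 1) := by
          rw [Finset.sum_const, smul_eq_mul, mul_comm]
      _ ≤ ∑ v ∈ Fx, (Ff.filter (fun e => v ∈ e)).card := by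
          apply Finset.sum_le_sum
          intro v hv
          rw [filter_card_eq_ncard hFfin]
          exact hdeg v (hXfin.mem_toFinset.mp hv)
  have hW2 : (d + 1) * FQ.card ≤ ∑ e ∈ Ff, (FQ.filter (fun S => crossP S e)).card := by
    rw [sum_filter_card_comm Ff FQ (fun e S => crossP S e)]
    calc (d + 1) * FQ.card = ∑ _S ∈ FQ, (d + 1) := by
          rw [Finset.sum_const, smul_eq_mul, mul_comm]
      _ ≤ ∑ S ∈ FQ, (Ff.filter (fun e => crossP S e)).card := by
          apply Finset.sum_le_sum
          intro S hS
          rw [filter_card_eq_ncard hFfin]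
          exact hQdeg S (hQfin.mem_toFinset.mp hS)
  have hW3 : ∑ e ∈ Ff, ((Fx.filter (fun v => v ∈ e)).card
      + (FQ.filter (fun S => crossP S e)).card) ≤ 2 * Ff.card := by
    calc ∑ e ∈ Ff, ((Fx.filter (fun v => v ∈ e)).card
          + (FQ.filter (fun S => crossP S e)).card) ≤ ∑ _e ∈ Ff, 2 := by
          apply Finset.sum_le_sum
          intro e he
          rw [filter_card_eq_ncard hXfin, filter_card_eq_ncard hQfin]
          exact hperedge e (hFfin.mem_toFinset.mp he)
      _ = 2 * Ff.card := by rw [Finset.sum_const, smul_eq_mul, mul_comm]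
  rw [Finset.sum_add_distrib] at hW3
  have hXcard : X.ncard = Fx.card := Set.ncard_eq_toFinset_card X hXfin
  have hQcard : Q.ncard = FQ.card := Set.ncard_eq_toFinset_card Q hQfin
  have hFcard : F.ncard = Ff.card := Set.ncard_eq_toFinset_card F hFfin
  rw [hXcard, hQcard, hFcard, Nat.mul_add]
  omega

end StepCounting
section MainCounting

open SimpleGraph

variable {V : Type*} [DecidableEq V] [Fintype V]

lemma vertsOf_empty : vertsOf (∅ : Set (Sym2 V)) = ∅ := by
  ext v
  simp [vertsOf]

lemma compSets_empty_W (H : SimpleGraph V) : compSets H (∅ : Set V) = ∅ := by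
  ext S
  simp [compSets]

lemma counting_main {d : ℕ} {G : SimpleGraph V} {C : ℕ → Set (Sym2 V)} {t : ℕ}
    (hdecomp : G.IsStrictRdCircDecomp d C t)
    (hec : ∀ A : Set (Sym2 V), IsRdCircuitSet d A → IsKEdgeConnectedEdgeSet (d + 1) A) :
    ∀ j ≤ t, (d + 1) * ((vertsOf (circUnion C j)).ncard + j) ≤
      2 * (circUnion C j).ncard +
      (d + 1) * (compSets (fromEdgeSet (circUnion C j)) (vertsOf (circUnion C j))).ncard := by
  intro j
  induction j with
  | zero =>
    intro _
    rw [circUnion_zero, vertsOf_empty, compSets_empty_W]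
    simp
  | succ j ih =>
    intro hj
    have hj' : j < t := hj
    have ihj := ih (le_of_lt hj')
    have hCc := (hdecomp.1.1 j hj').2
    have hCs := (hdecomp.1.1 j hj').1
    have hX := hdecomp.2 j hj'
    set Di := circUnion C j with hDi
    set Ci := C j with hCi
    have hstep := step_counting d Ci Di
      (fun e he => G.not_isDiag_of_mem_edgeSet (hCs he)) (hec Ci hCc) hX
    have hvCine : (vertsOf Ci).Nonempty := by
      obtain ⟨x, hx⟩ := hX
      exact ⟨x, hx.1⟩
    have hcomp := comp_step Di Ci hvCine
    have hDsucc : circUnion C (j + 1) = Di ∪ Ci := circUnion_succ C j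
    have hvuni : vertsOf (Di ∪ Ci) = vertsOf Di ∪ vertsOf Ci := vertsOf_union Di Ci
    have hv2 : vertsOf Di ∪ vertsOf Ci = vertsOf Di ∪ (vertsOf Ci \ vertsOf Di) :=
      (Set.union_diff_self).symm
    have hvcard : (vertsOf (Di ∪ Ci)).ncard =
        (vertsOf Di).ncard + (vertsOf Ci \ vertsOf Di).ncard := by
      rw [hvuni, hv2]
      exact Set.ncard_union_eq Set.disjoint_sdiff_right (Set.toFinite _) (Set.toFinite _)
    have hecard : (Di ∪ Ci).ncard = Di.ncard + (Ci \ Di).ncard := by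
      rw [← Set.union_diff_self]
      exact Set.ncard_union_eq Set.disjoint_sdiff_right (Set.toFinite _) (Set.toFinite _)
    rw [hDsucc, hvcard, hecard]
    set a := (vertsOf Di).ncard
    set x := (vertsOf Ci \ vertsOf Di).ncard
    set q := (compSets (fromEdgeSet Di) (vertsOf Di) ∩
      {S : Set V | (S ∩ vertsOf Ci).Nonempty}).ncard
    set c0 := (compSets (fromEdgeSet Di) (vertsOf Di)).ncard
    set c1 := (compSets (fromEdgeSet (Di ∪ Ci)) (vertsOf Di ∪ vertsOf Ci)).ncard
    set m0 := Di.ncard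
    set f := (Ci \ Di).ncard
    -- ihj : (d+1)*(a + j) ≤ 2*m0 + (d+1)*c0
    -- hstep : (d+1)*(x + q) ≤ 2*f
    -- hcomp : c0 + 1 ≤ c1 + q
    have hvuni' : (compSets (fromEdgeSet (Di ∪ Ci)) (vertsOf (Di ∪ Ci))).ncard = c1 := by
      rw [hvuni]
    rw [hvuni']
    calc (d + 1) * (a + x + (j + 1))
        = (d + 1) * (a + j) + ((d + 1) * x + (d + 1) * 1) := by ring
      _ ≤ (2 * m0 + (d + 1) * c0) + ((d + 1) * x + (d + 1) * 1) :=
          Nat.add_le_add_right ihj _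
      _ = 2 * m0 + (d + 1) * x + (d + 1) * (c0 + 1) := by ring
      _ ≤ 2 * m0 + (d + 1) * x + (d + 1) * (c1 + q) :=
          Nat.add_le_add_left (Nat.mul_le_mul_left _ hcomp) _
      _ = 2 * m0 + (d + 1) * (x + q) + (d + 1) * c1 := by ring
      _ ≤ 2 * m0 + 2 * f + (d + 1) * c1 :=
          Nat.add_le_add_right (Nat.add_le_add_left hstep _) _
      _ = 2 * (m0 + f) + (d + 1) * c1 := by ring

lemma vertsOf_edgeSet_eq_univ {G : SimpleGraph V} (hconn : G.Connected)
    (hcard : 2 ≤ Fintype.card V) : vertsOf G.edgeSet = Set.univ := by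
  ext v
  simp only [Set.mem_univ, iff_true]
  obtain ⟨w, hw⟩ := Fintype.exists_ne_of_one_lt_card (by omega) v
  obtain ⟨q⟩ := hconn.preconnected v w
  cases q with
  | nil => exact absurd rfl hw
  | @cons _ b _ hadj _ => exact ⟨s(v, b), (SimpleGraph.mem_edgeSet G).mpr hadj, by simp⟩

lemma counting_bound {d : ℕ} {G : SimpleGraph V} {C : ℕ → Set (Sym2 V)} {t : ℕ}
    (hconn : G.Connected) (hdecomp : G.IsStrictRdCircDecomp d C t)
    (hec : ∀ A : Set (Sym2 V), IsRdCircuitSet d A → IsKEdgeConnectedEdgeSet (d + 1) A)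
    (hcard : 2 ≤ Fintype.card V) :
    (d + 1) * (Fintype.card V + t) ≤ 2 * G.edgeSet.ncard + (d + 1) := by
  have h := counting_main hdecomp hec t le_rfl
  rw [hdecomp.1.2.2] at h
  rw [vertsOf_edgeSet_eq_univ hconn hcard, Set.ncard_univ, Nat.card_eq_fintype_card] at h
  have hcf := comp_final hconn (W := (Set.univ : Set V))
  calc (d + 1) * (Fintype.card V + t)
      ≤ 2 * G.edgeSet.ncard +
        (d + 1) * (compSets (fromEdgeSet G.edgeSet) Set.univ).ncard := h
    _ ≤ 2 * G.edgeSet.ncard + (d + 1) * 1 := by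
        exact Nat.add_le_add_left (Nat.mul_le_mul_left _ (comp_final hconn _)) _
    _ = 2 * G.edgeSet.ncard + (d + 1) := by ring

end MainCounting
/-- If `G = (V, E)` is a connected graph such that `R_d(G)` has a strict circuit
decomposition, and every `R_d`-circuit is `(d+1)`-edge-connected, then
`k_d(G) ≤ (1/2)(d-1)(|V| - (r*_d(G) + d + 1))`; equivalently, for `d ≥ 2`,
`r*_d(G) ≤ |V| - (2/(d-1)) k_d(G) - (d+1)`, where `r*_d(G) = |E| - r_d(E)`. -/
theorem strict_circDecomp_degFreedom_bound {V : Type*} [DecidableEq V] [Fintype V]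
    (d : ℕ) (G : SimpleGraph V) [DecidableRel G.Adj]
    (hconn : G.Connected)
    (C : ℕ → Set (Sym2 V)) (t : ℕ) (hdecomp : G.IsStrictRdCircDecomp d C t)
    (hec : ∀ A : Set (Sym2 V), IsRdCircuitSet d A → IsKEdgeConnectedEdgeSet (d + 1) A) :
    (degFreedom d G : ℚ) ≤
        (1 / 2) * ((d : ℚ) - 1) *
          ((Fintype.card V : ℚ) -
            (((G.edgeFinset.card : ℚ) - (genRigidityRank d G.edgeSet : ℚ)) + d + 1)) ∧
      (2 ≤ d →
        (G.edgeFinset.card : ℚ) - (genRigidityRank d G.edgeSet : ℚ) ≤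
          (Fintype.card V : ℚ) - (2 / ((d : ℚ) - 1)) * (degFreedom d G : ℚ) -
            ((d : ℚ) + 1)) := by
  classical
  have hmn : G.edgeSet.ncard = G.edgeFinset.card := by
    rw [← SimpleGraph.coe_edgeFinset, Set.ncard_coe_finset]
  have hnull : G.edgeFinset.card ≤ genRigidityRank d G.edgeSet + t := by
    have h := nullity_bound (d := d) (G := G) hdecomp.1
    rwa [hmn] at h
  have hch : ((d + 1).choose 2) * 2 = (d + 1) * d := by
    rw [Nat.choose_two_right]
    have h2 : 2 ∣ (d + 1) * d := by
      rw [mul_comm]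
      exact (Nat.even_mul_succ_self d).two_dvd
    simp only [Nat.add_sub_cancel]
    exact Nat.div_mul_cancel h2
  have hchq : ((d + 1).choose 2 : ℚ) * 2 = ((d : ℚ) + 1) * (d : ℚ) := by
    exact_mod_cast hch
  set n := Fintype.card V with hn
  set m := G.edgeFinset.card with hmdef
  set r := genRigidityRank d G.edgeSet with hrdef
  have hA : ((d : ℚ) + 1) * ((n : ℚ) + (m : ℚ) - (r : ℚ) - 1) ≤ 2 * (m : ℚ) := by
    rcases le_or_gt 2 n with hn2 | hn2
    · have hcount := counting_bound hconn hdecomp hec hn2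
      rw [hmn] at hcount
      have hcq : ((d : ℚ) + 1) * ((n : ℚ) + (t : ℚ)) ≤ 2 * (m : ℚ) + ((d : ℚ) + 1) := by
        exact_mod_cast hcount
      have hnq : (m : ℚ) - (r : ℚ) ≤ (t : ℚ) := by
        have h1 : (m : ℚ) ≤ (r : ℚ) + (t : ℚ) := by exact_mod_cast hnull
        linarith
      nlinarith [hcq, hnq, (by positivity : (0 : ℚ) ≤ (d : ℚ) + 1)]
    · haveI : Nonempty V := hconn.nonempty
      have hpos : 0 < n := Fintype.card_pos
      have hn1 : n = 1 := by omega
      have hE : G.edgeSet = ∅ := by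
        ext e
        simp only [Set.mem_empty_iff_false, iff_false]
        induction e using Sym2.inductionOn with
        | hf u v =>
          intro he
          have hadj : G.Adj u v := he
          exact hadj.ne (Fintype.card_le_one_iff.mp (by omega) u v)
      have hm0 : m = 0 := by rw [← hmn, hE, Set.ncard_empty]
      have hr0 : r = 0 := by rw [hrdef, hE, genRigidityRank_empty]
      rw [hm0, hr0, hn1]
      norm_num
  have hk : (degFreedom d G : ℚ) = (d : ℚ) * (n : ℚ) - ((d + 1).choose 2 : ℚ) - (r : ℚ) := by
    unfold degFreedom
    push_cast
    rw [← hn, ← hrdef]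
  constructor
  · rw [hk]
    nlinarith [hA, hchq]
  · intro hd2
    have hd1 : (0 : ℚ) < (d : ℚ) - 1 := by
      have h1 : (2 : ℚ) ≤ (d : ℚ) := by exact_mod_cast hd2
      linarith
    have h2k : 2 * (degFreedom d G : ℚ) ≤
        ((d : ℚ) - 1) * ((n : ℚ) - ((m : ℚ) - (r : ℚ)) - ((d : ℚ) + 1)) := by
      rw [hk]
      nlinarith [hA, hchq]
    have h3 : (2 * (degFreedom d G : ℚ)) / ((d : ℚ) - 1) ≤
        (n : ℚ) - ((m : ℚ) - (r : ℚ)) - ((d : ℚ) + 1) := by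
      rw [div_le_iff₀ hd1]
      nlinarith [h2k]
    have h4 : (2 / ((d : ℚ) - 1)) * (degFreedom d G : ℚ)
        = (2 * (degFreedom d G : ℚ)) / ((d : ℚ) - 1) := by ring
    rw [h4]
    linarith [h3]
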